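/- For the Rosenbrock function with metric M(x) = [[400x₁² + 1, -200x₁], [-200x₁, 100]] and natural gradient field h(x) = -2(x₁ - 1, x₁² - 2x₁ + x₂), one has the exact matrix identity M(x)(∂h/∂x) + (∂h/∂x)ᵀM(x) + Ṁ(x) = -4M(x), where Ṁ(x) = Σᵢ(∂M/∂xᵢ)hᵢ(x); hence the flow ẋ = h(x) is contracting with rate 2 in metric M. -/

import Mathlib

open Matrix

noncomputable def pd {ι : Type*} [Fintype ι] [DecidableEq ι]
    (f : (ι → ℝ) → ℝ) (i : ι) (x : ι → ℝ) : ℝ :=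
  fderiv ℝ f x (Pi.single i 1)

/-- The Rosenbrock metric M(x). -/
noncomputable def rosMetric (x : Fin 2 → ℝ) : Matrix (Fin 2) (Fin 2) ℝ :=
  !![400 * (x 0) ^ 2 + 1, -200 * x 0; -200 * x 0, 100]

/-- The natural gradient field of the Rosenbrock function. -/
noncomputable def rosField (x : Fin 2 → ℝ) : Fin 2 → ℝ :=
  ![-2 * (x 0 - 1), -2 * ((x 0) ^ 2 - 2 * x 0 + x 1)]

/-- Jacobian ∂h/∂x of the field. -/
noncomputable def rosJac (x : Fin 2 → ℝ) : Matrix (Fin 2) (Fin 2) ℝ :=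
  Matrix.of fun i j => pd (fun y => rosField y i) j x

/-- Ṁ = Σᵢ (∂M/∂xᵢ) hᵢ along the field. -/
noncomputable def rosMDot (x : Fin 2 → ℝ) : Matrix (Fin 2) (Fin 2) ℝ :=
  Matrix.of fun i j => ∑ k, pd (fun y => rosMetric y i j) k x * rosField x k

lemma pd_of_hasFDerivAt {f : (Fin 2 → ℝ) → ℝ} {L : (Fin 2 → ℝ) →L[ℝ] ℝ}
    {x : Fin 2 → ℝ} (h : HasFDerivAt f L x) (i : Fin 2) :
    pd f i x = L (Pi.single i 1) := by
  rw [pd, h.fderiv]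

lemma hp0 (x : Fin 2 → ℝ) : HasFDerivAt (fun y : Fin 2 → ℝ => y 0)
    (ContinuousLinearMap.proj (R := ℝ) (φ := fun _ : Fin 2 => ℝ) 0) x :=
  hasFDerivAt_apply 0 x

lemma hp1 (x : Fin 2 → ℝ) : HasFDerivAt (fun y : Fin 2 → ℝ => y 1)
    (ContinuousLinearMap.proj (R := ℝ) (φ := fun _ : Fin 2 => ℝ) 1) x :=
  hasFDerivAt_apply 1 x

lemma pd_field0 (x : Fin 2 → ℝ) (j : Fin 2) :
    pd (fun y => -2 * (y 0 - 1)) j x = if j = 0 then -2 else 0 := by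
  rw [pd_of_hasFDerivAt (((hp0 x).sub_const 1).const_mul (-2))]
  fin_cases j <;> simp [Pi.single_apply]

lemma pd_field1 (x : Fin 2 → ℝ) (j : Fin 2) :
    pd (fun y => -2 * ((y 0) ^ 2 - 2 * y 0 + y 1)) j x
      = if j = 0 then -4 * x 0 + 4 else -2 := by
  have e : (fun y : Fin 2 → ℝ => -2 * ((y 0) ^ 2 - 2 * y 0 + y 1))
      = fun y => -2 * (y 0 * y 0 - 2 * y 0 + y 1) := by funext y; ring
  rw [e, pd_of_hasFDerivAt (f := fun y => -2 * (y 0 * y 0 - 2 * y 0 + y 1)) ((((((hp0 x).mul (hp0 x)).sub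
      ((hp0 x).const_mul 2)).add (hp1 x)).const_mul (-2)))]
  fin_cases j <;> simp [Pi.single_apply] <;> ring

lemma pd_m00 (x : Fin 2 → ℝ) (j : Fin 2) :
    pd (fun y => 400 * (y 0) ^ 2 + 1) j x = if j = 0 then 800 * x 0 else 0 := by
  have e : (fun y : Fin 2 → ℝ => 400 * (y 0) ^ 2 + 1)
      = fun y => 400 * (y 0 * y 0) + 1 := by funext y; ring
  rw [e, pd_of_hasFDerivAt (f := fun y => 400 * (y 0 * y 0) + 1) ((((hp0 x).mul (hp0 x)).const_mul 400).add_const 1)]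
  fin_cases j <;> simp [Pi.single_apply] <;> ring

lemma pd_m01 (x : Fin 2 → ℝ) (j : Fin 2) :
    pd (fun y => -200 * y 0) j x = if j = 0 then -200 else 0 := by
  rw [pd_of_hasFDerivAt ((hp0 x).const_mul (-200))]
  fin_cases j <;> simp [Pi.single_apply]

lemma pd_const (c : ℝ) (x : Fin 2 → ℝ) (j : Fin 2) :
    pd (fun _ => c) j x = 0 := by
  rw [pd_of_hasFDerivAt (hasFDerivAt_const c x)]
  simp

lemma tr2 (a b c d : ℝ) : (!![a, b; c, d])ᵀ = !![a, c; b, d] := by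
  ext i j; fin_cases i <;> fin_cases j <;> simp

lemma ef0 : (fun y : Fin 2 → ℝ => rosField y 0) = fun y => -2 * (y 0 - 1) := by
  funext y; simp [rosField]

lemma ef1 : (fun y : Fin 2 → ℝ => rosField y 1)
    = fun y => -2 * ((y 0) ^ 2 - 2 * y 0 + y 1) := by
  funext y; simp [rosField]

lemma em00 : (fun y : Fin 2 → ℝ => rosMetric y 0 0)
    = fun y => 400 * (y 0) ^ 2 + 1 := by funext y; simp [rosMetric]

lemma em01 : (fun y : Fin 2 → ℝ => rosMetric y 0 1)
    = fun y => -200 * y 0 := by funext y; simp [rosMetric]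

lemma em10 : (fun y : Fin 2 → ℝ => rosMetric y 1 0)
    = fun y => -200 * y 0 := by funext y; simp [rosMetric]

lemma em11 : (fun y : Fin 2 → ℝ => rosMetric y 1 1)
    = fun _ => (100 : ℝ) := by funext y; simp [rosMetric]

lemma rosJac_eq (x : Fin 2 → ℝ) :
    rosJac x = !![-2, 0; -4 * x 0 + 4, -2] := by
  ext i j
  fin_cases i <;> fin_cases j
  · show pd (fun y => rosField y 0) 0 x = _
    rw [ef0, pd_field0]; norm_num
  · show pd (fun y => rosField y 0) 1 x = _
    rw [ef0, pd_field0]; norm_num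
  · show pd (fun y => rosField y 1) 0 x = _
    rw [ef1, pd_field1]; norm_num
  · show pd (fun y => rosField y 1) 1 x = _
    rw [ef1, pd_field1]; norm_num

lemma rosMDot_eq (x : Fin 2 → ℝ) :
    rosMDot x = !![800 * x 0 * (-2 * (x 0 - 1)), -200 * (-2 * (x 0 - 1));
                   -200 * (-2 * (x 0 - 1)), 0] := by
  ext i j
  fin_cases i <;> fin_cases j
  · show ∑ k, pd (fun y => rosMetric y 0 0) k x * rosField x k = _
    rw [em00, Fin.sum_univ_two, pd_m00, pd_m00]; simp [rosField]
  · show ∑ k, pd (fun y => rosMetric y 0 1) k x * rosField x k = _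
    rw [em01, Fin.sum_univ_two, pd_m01, pd_m01]; simp [rosField]
  · show ∑ k, pd (fun y => rosMetric y 1 0) k x * rosField x k = _
    rw [em10, Fin.sum_univ_two, pd_m01, pd_m01]; simp [rosField]
  · show ∑ k, pd (fun y => rosMetric y 1 1) k x * rosField x k = _
    rw [Fin.sum_univ_two, em11, pd_const, pd_const]; simp

/-- M(∂h/∂x) + (∂h/∂x)ᵀM + Ṁ = -4M exactly; hence the Rosenbrock natural
gradient flow is contracting with rate 2 in the Rosenbrock metric. -/
theorem rosenbrock_contraction_rate_two :
    ∀ x : Fin 2 → ℝ,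
      (rosMetric x * rosJac x + (rosJac x)ᵀ * rosMetric x + rosMDot x
        = (-4 : ℝ) • rosMetric x) ∧
      (-(rosMDot x + (rosJac x)ᵀ * rosMetric x + rosMetric x * rosJac x
          + (2 * 2 : ℝ) • rosMetric x)).PosSemidef := by
  intro x
  have key : rosMetric x * rosJac x + (rosJac x)ᵀ * rosMetric x + rosMDot x
      = (-4 : ℝ) • rosMetric x := by
    rw [rosJac_eq, rosMDot_eq, rosMetric, tr2]
    ext i j
    fin_cases i <;> fin_cases j <;>
      simp [Matrix.mul_apply, Fin.sum_univ_two, Matrix.transpose_apply] <;> ring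
  refine ⟨key, ?_⟩
  have hz : -(rosMDot x + (rosJac x)ᵀ * rosMetric x + rosMetric x * rosJac x
      + (2 * 2 : ℝ) • rosMetric x) = 0 := by
    have : rosMDot x + (rosJac x)ᵀ * rosMetric x + rosMetric x * rosJac x
        = rosMetric x * rosJac x + (rosJac x)ᵀ * rosMetric x + rosMDot x := by
      abel
    rw [this, key]
    ext i j
    simp [Matrix.smul_apply]
    ring
  rw [hz]
  exact Matrix.PosSemidef.zero
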